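/- Let n ≥ 1, let D and Θ be measurable spaces, let f be a trade-off function, and let M be a Markov kernel from Dⁿ (functions Fin n → D) to Θ satisfying f-DP with respect to the replace-one relation. Define f⁽ⁿ⁾ : [0,1] → [0,1] by f⁽ⁿ⁾(x) = 1 − (1−f)∘ⁿ(x), where (1−f)∘ⁿ is the n-fold composition of the map x ↦ 1 − f(x). Then for every probability measure P on D and every jointly measurable R : Dⁿ × Θ → [0,1], ∫_{Dⁿ} ∫_Θ R(S, θ) d(M(S))(θ) dPⁿ(S) ≤ 1 − f⁽ⁿ⁾( ∫_{Dⁿ} ∫_{Dⁿ} ∫_Θ R(T, θ) d(M(S))(θ) dPⁿ(T) dPⁿ(S) ). -/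

import Mathlib

open MeasureTheory ProbabilityTheory

/-- A trade-off function: convex, continuous, non-increasing on `[0,1]`,
taking values in `[0,1]` with `f α ≤ 1 - α`. -/
def IsTradeoff (f : ℝ → ℝ) : Prop :=
  ConvexOn ℝ (Set.Icc (0:ℝ) 1) f ∧ ContinuousOn f (Set.Icc (0:ℝ) 1) ∧
  AntitoneOn f (Set.Icc (0:ℝ) 1) ∧
  ∀ x ∈ Set.Icc (0:ℝ) 1, f x ∈ Set.Icc (0:ℝ) 1 ∧ f x ≤ 1 - x

/-- The pair `(P, Q)` satisfies the `f`-DP inequality: every randomized test `φ` has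
`∫ φ dQ ≤ 1 - f (∫ φ dP)`. -/
def FDPIneq {Θ : Type*} [MeasurableSpace Θ] (f : ℝ → ℝ) (P Q : Measure Θ) : Prop :=
  ∀ φ : Θ → ℝ, Measurable φ → (∀ θ, φ θ ∈ Set.Icc (0:ℝ) 1) →
    ∫ θ, φ θ ∂Q ≤ 1 - f (∫ θ, φ θ ∂P)

section Aux

lemma aux_integrable_of_Icc {Θ : Type*} [MeasurableSpace Θ] (Q : Measure Θ)
    [IsProbabilityMeasure Q] (φ : Θ → ℝ) (hm : AEStronglyMeasurable φ Q)
    (h01 : ∀ θ, φ θ ∈ Set.Icc (0:ℝ) 1) : Integrable φ Q :=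
  ⟨hm, HasFiniteIntegral.of_bounded (C := 1) (Filter.Eventually.of_forall fun θ => by
    rw [Real.norm_eq_abs, abs_le]
    exact ⟨by linarith [(h01 θ).1], (h01 θ).2⟩)⟩

lemma aux_integral_mem_Icc {Θ : Type*} [MeasurableSpace Θ] (Q : Measure Θ)
    [IsProbabilityMeasure Q] (φ : Θ → ℝ) (hm : AEStronglyMeasurable φ Q)
    (h01 : ∀ θ, φ θ ∈ Set.Icc (0:ℝ) 1) : ∫ θ, φ θ ∂Q ∈ Set.Icc (0:ℝ) 1 := by
  constructor
  · exact integral_nonneg fun θ => (h01 θ).1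
  · calc ∫ θ, φ θ ∂Q ≤ ∫ _θ, (1:ℝ) ∂Q :=
        integral_mono (aux_integrable_of_Icc Q φ hm h01) (integrable_const 1)
          fun θ => (h01 θ).2
      _ = 1 := by simp

/-- Properties of iterates of a nice map on `[0,1]`. -/
lemma aux_iterate_props {g : ℝ → ℝ}
    (hmap : ∀ x ∈ Set.Icc (0:ℝ) 1, g x ∈ Set.Icc (0:ℝ) 1)
    (hmono : MonotoneOn g (Set.Icc (0:ℝ) 1))
    (hconc : ConcaveOn ℝ (Set.Icc (0:ℝ) 1) g)
    (hcont : ContinuousOn g (Set.Icc (0:ℝ) 1)) (k : ℕ) :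
    (∀ x ∈ Set.Icc (0:ℝ) 1, g^[k] x ∈ Set.Icc (0:ℝ) 1) ∧
    MonotoneOn (g^[k]) (Set.Icc (0:ℝ) 1) ∧
    ConcaveOn ℝ (Set.Icc (0:ℝ) 1) (g^[k]) ∧
    ContinuousOn (g^[k]) (Set.Icc (0:ℝ) 1) := by
  induction k with
  | zero =>
      simp only [Function.iterate_zero]
      exact ⟨fun x hx => hx, fun x hx y hy h => h, concaveOn_id (convex_Icc 0 1),
        continuousOn_id⟩
  | succ k ih =>
      obtain ⟨ihmap, ihmono, ihconc, ihcont⟩ := ih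
      rw [Function.iterate_succ']
      refine ⟨fun x hx => hmap _ (ihmap x hx), ?_, ?_, hcont.comp ihcont fun x hx => ihmap x hx⟩
      · exact fun x hx y hy hxy => hmono (ihmap x hx) (ihmap y hy) (ihmono hx hy hxy)
      · refine ⟨convex_Icc 0 1, fun x hx y hy a b ha hb hab => ?_⟩
        have hmem : a • x + b • y ∈ Set.Icc (0:ℝ) 1 := (convex_Icc 0 1) hx hy ha hb hab
        have h1 : a • g^[k] x + b • g^[k] y ≤ g^[k] (a • x + b • y) :=
          ihconc.2 hx hy ha hb hab
        have hcomb : a • g^[k] x + b • g^[k] y ∈ Set.Icc (0:ℝ) 1 :=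
          (convex_Icc 0 1) (ihmap x hx) (ihmap y hy) ha hb hab
        calc a • g (g^[k] x) + b • g (g^[k] y)
            ≤ g (a • g^[k] x + b • g^[k] y) := hconc.2 (ihmap x hx) (ihmap y hy) ha hb hab
          _ ≤ g (g^[k] (a • x + b • y)) := hmono hcomb (ihmap _ hmem) h1

end Aux

/-- Lemma D.2, first inequality: generalization for non-linear queries via
group privacy, with `f⁽ⁿ⁾ = 1 - (1 - f)∘ⁿ`. -/
theorem stmt_14 {D Θ : Type*} [MeasurableSpace D] [MeasurableSpace Θ]
    (n : ℕ) (hn : 1 ≤ n)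
    (f : ℝ → ℝ) (hf : IsTradeoff f)
    (M : Kernel (Fin n → D) Θ) [IsMarkovKernel M]
    (hDP : ∀ S S' : Fin n → D, (∃ i : Fin n, ∀ j : Fin n, j ≠ i → S j = S' j) →
      FDPIneq f (M S') (M S))
    (fn : ℝ → ℝ) (hfn : ∀ x, fn x = 1 - (fun y => 1 - f y)^[n] x)
    (P : Measure D) [IsProbabilityMeasure P]
    (R : (Fin n → D) → Θ → ℝ) (hR : Measurable (Function.uncurry R))
    (hR01 : ∀ S θ, R S θ ∈ Set.Icc (0:ℝ) 1) :
    ∫ S, ∫ θ, R S θ ∂(M S) ∂(Measure.pi fun _ : Fin n => P) ≤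
      1 - fn (∫ S, ∫ T, ∫ θ, R T θ ∂(M S) ∂(Measure.pi fun _ : Fin n => P)
        ∂(Measure.pi fun _ : Fin n => P)) := by
  obtain ⟨hfconv, hfcont, hfanti, hfbd⟩ := hf
  set g : ℝ → ℝ := fun y => 1 - f y with hg
  set I : Set ℝ := Set.Icc (0:ℝ) 1 with hI
  -- basic properties of g
  have hmap : ∀ x ∈ I, g x ∈ I := fun x hx => by
    obtain ⟨h1, _⟩ := hfbd x hx
    exact ⟨by simp [hg]; linarith [h1.2], by simp [hg]; linarith [h1.1]⟩
  have hmono : MonotoneOn g I := fun x hx y hy hxy => by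
    simp only [hg]; linarith [hfanti hx hy hxy]
  have hconc : ConcaveOn ℝ I g := by
    have := (hfconv.neg).add_const 1
    have heq : g = (-f + fun _ => 1) := by
      funext y; simp only [hg, Pi.add_apply, Pi.neg_apply]; ring
    rw [heq]; exact this
  have hcont : ContinuousOn g I := continuousOn_const.sub hfcont
  obtain ⟨hnmap, hnmono, hnconc, hncont⟩ :=
    aux_iterate_props hmap hmono hconc hcont n
  -- group privacy: for any S T and any test φ
  have hgroup : ∀ (φ : Θ → ℝ), Measurable φ → (∀ θ, φ θ ∈ I) →
      ∀ S T : Fin n → D, ∫ θ, φ θ ∂(M S) ≤ g^[n] (∫ θ, φ θ ∂(M T)) := by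
    intro φ hφm hφ01 S T
    have hint : ∀ U : Fin n → D, ∫ θ, φ θ ∂(M U) ∈ I := fun U =>
      aux_integral_mem_Icc (M U) φ hφm.aestronglyMeasurable hφ01
    set U : ℕ → (Fin n → D) := fun k j => if (j : ℕ) < k then S j else T j with hU
    have hU0 : U 0 = T := by funext j; simp [hU]
    have hUn : U n = S := by funext j; simp [hU, j.isLt]
    have key : ∀ k, k ≤ n → ∫ θ, φ θ ∂(M (U k)) ≤ g^[k] (∫ θ, φ θ ∂(M T)) := by
      intro k hk
      induction k with
      | zero => simp [hU0]
      | succ k ihk =>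
          have hk' : k ≤ n := Nat.le_of_succ_le hk
          have hkn : k < n := hk
          have hdiff : ∃ i : Fin n, ∀ j : Fin n, j ≠ i → U (k + 1) j = U k j := by
            refine ⟨⟨k, hkn⟩, fun j hj => ?_⟩
            have hjk : (j : ℕ) ≠ k := fun h => hj (Fin.ext h)
            simp only [hU]
            by_cases h : (j : ℕ) < k
            · simp [h, Nat.lt_succ_of_lt h]
            · have : ¬ (j : ℕ) < k + 1 := by omega
              simp [h, this]
          have hstep : ∫ θ, φ θ ∂(M (U (k+1))) ≤ g (∫ θ, φ θ ∂(M (U k))) := by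
            have := hDP (U (k+1)) (U k) hdiff φ hφm hφ01
            simpa [hg] using this
          have hmonok := (aux_iterate_props hmap hmono hconc hcont k).2.1
          have hmapk := (aux_iterate_props hmap hmono hconc hcont k).1
          calc ∫ θ, φ θ ∂(M (U (k+1))) ≤ g (∫ θ, φ θ ∂(M (U k))) := hstep
            _ ≤ g (g^[k] (∫ θ, φ θ ∂(M T))) :=
                hmono (hint (U k)) (hmapk _ (hint T)) (ihk hk')
            _ = g^[k+1] (∫ θ, φ θ ∂(M T)) := by
                rw [Function.iterate_succ']; rfl
    have := key n le_rfl
    rwa [hUn] at this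
  -- set up measures and integrands
  set μ : Measure (Fin n → D) := Measure.pi fun _ : Fin n => P with hμ
  have : IsProbabilityMeasure μ := by rw [hμ]; infer_instance
  set ν : Measure ((Fin n → D) × (Fin n → D)) := μ.prod μ with hν
  have : IsProbabilityMeasure ν := by rw [hν]; infer_instance
  set H : (Fin n → D) × (Fin n → D) → ℝ := fun p => ∫ θ, R p.1 θ ∂(M p.2) with hH
  set Hd : (Fin n → D) → ℝ := fun S => ∫ θ, R S θ ∂(M S) with hHd
  -- measurability
  have hRS : ∀ S, Measurable (R S) := fun S =>
    hR.comp (measurable_prodMk_left)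
  have hHdm : StronglyMeasurable Hd :=
    hR.stronglyMeasurable.integral_kernel_prod_right' (κ := M)
  have hHm : StronglyMeasurable H := by
    have hκ := (M.comap Prod.snd measurable_snd :
      Kernel ((Fin n → D) × (Fin n → D)) Θ)
    have hfm : Measurable (fun u : ((Fin n → D) × (Fin n → D)) × Θ => R u.1.1 u.2) :=
      hR.comp (measurable_fst.fst.prodMk measurable_snd)
    have := hfm.stronglyMeasurable.integral_kernel_prod_right'
      (κ := M.comap Prod.snd measurable_snd)
    simpa [Kernel.comap_apply, hH] using this
  have hH01 : ∀ p, H p ∈ I := fun p =>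
    aux_integral_mem_Icc (M p.2) (R p.1) (hRS p.1).aestronglyMeasurable (hR01 p.1)
  have hHd01 : ∀ S, Hd S ∈ I := fun S =>
    aux_integral_mem_Icc (M S) (R S) (hRS S).aestronglyMeasurable (hR01 S)
  -- pointwise group privacy inequality
  have hkey : ∀ p : (Fin n → D) × (Fin n → D), Hd p.1 ≤ g^[n] (H p) := fun p =>
    hgroup (R p.1) (hRS p.1) (hR01 p.1) p.1 p.2
  -- global measurable extension of g^[n]
  set G : ℝ → ℝ := Set.IccExtend (zero_le_one) ((Set.Icc (0:ℝ) 1).restrict (g^[n])) with hG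
  have hGcont : Continuous G :=
    continuous_IccExtend_iff.mpr (continuousOn_iff_continuous_restrict.mp hncont)
  have hGeq : ∀ x ∈ I, G x = g^[n] x := fun x hx => by
    rw [hG, Set.IccExtend_of_mem _ _ hx]; rfl
  -- integrabilities
  have hHint : Integrable H ν :=
    aux_integrable_of_Icc ν H hHm.aestronglyMeasurable hH01
  have hGHint : Integrable (g^[n] ∘ H) ν := by
    have heq : (g^[n] ∘ H) = G ∘ H := by
      funext p; simp [Function.comp, hGeq _ (hH01 p)]
    rw [heq]
    exact aux_integrable_of_Icc ν (G ∘ H)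
      (hGcont.measurable.comp hHm.measurable).aestronglyMeasurable
      (fun p => by simp only [Function.comp]; rw [hGeq _ (hH01 p)]; exact hnmap _ (hH01 p))
  have hHdfst : Integrable (fun p : (Fin n → D) × (Fin n → D) => Hd p.1) ν :=
    aux_integrable_of_Icc ν _ (hHdm.measurable.comp measurable_fst).aestronglyMeasurable
      (fun p => hHd01 p.1)
  -- chain of inequalities
  have step1 : ∫ p, Hd p.1 ∂ν ≤ ∫ p, g^[n] (H p) ∂ν :=
    integral_mono hHdfst hGHint hkey
  have step2 : ∫ p, g^[n] (H p) ∂ν ≤ g^[n] (∫ p, H p ∂ν) :=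
    hnconc.le_map_integral hncont isClosed_Icc
      (Filter.Eventually.of_forall hH01) hHint hGHint
  -- identify the integrals
  have eq1 : ∫ p, Hd p.1 ∂ν = ∫ S, Hd S ∂μ := by
    rw [hν, integral_prod _ hHdfst]
    simp
  have eq2 : ∫ p, H p ∂ν =
      ∫ S, ∫ T, ∫ θ, R T θ ∂(M S) ∂μ ∂μ := by
    rw [hν, integral_prod _ hHint]
    have swap := integral_integral_swap (f := fun x y => H (x, y)) (μ := μ) (ν := μ)
      (by exact hHint)
    simpa [hH] using swap
  rw [hfn]
  have : (1 : ℝ) - (1 - (fun y => 1 - f y)^[n]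
      (∫ S, ∫ T, ∫ θ, R T θ ∂(M S) ∂μ ∂μ)) =
      g^[n] (∫ S, ∫ T, ∫ θ, R T θ ∂(M S) ∂μ ∂μ) := by ring
  rw [this]
  calc ∫ S, Hd S ∂μ = ∫ p, Hd p.1 ∂ν := eq1.symm
    _ ≤ ∫ p, g^[n] (H p) ∂ν := step1
    _ ≤ g^[n] (∫ p, H p ∂ν) := step2
    _ = g^[n] (∫ S, ∫ T, ∫ θ, R T θ ∂(M S) ∂μ ∂μ) := by rw [eq2]
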